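/- Let N be an odd positive integer, q a prime power, and let 0 ≤ i_1 < i_2 ≤ N − 1. Let A be the N×N circulant matrix over F_q associated with a(x) = x^{i_1} + x^{i_2}. Then the girth of the Tanner graph of A equals 2N / gcd(N, i_2 − i_1); in particular, since N is odd, this girth is strictly greater than 4. -/

import Mathlib

/-- The `N × N` circulant permutation matrix `P_N ^ k` over `F`: its `(a, b)` entry is
`1` exactly when `b ≡ a + k (mod N)`. -/
def cpm (F : Type*) [Zero F] [One F] (N k : ℕ) : Matrix (Fin N) (Fin N) F :=
  Matrix.of fun a b => if ((b : ℕ) : ZMod N) = ((a : ℕ) : ZMod N) + (k : ZMod N) then 1 else 0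

/-- The Tanner graph of a matrix `M`: the bipartite graph on the disjoint union of row
and column indices, in which row vertex `i` is adjacent to column vertex `j` iff
`M i j ≠ 0`. -/
def tannerGraph {m n : ℕ} {F : Type*} [Zero F] (M : Matrix (Fin m) (Fin n) F) :
    SimpleGraph (Fin m ⊕ Fin n) where
  Adj u v := (∃ i j, u = Sum.inl i ∧ v = Sum.inr j ∧ M i j ≠ 0) ∨
             (∃ i j, u = Sum.inr j ∧ v = Sum.inl i ∧ M i j ≠ 0)
  symm := by
    constructor
    rintro u v (⟨i, j, rfl, rfl, h⟩ | ⟨i, j, rfl, rfl, h⟩)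
    · exact Or.inr ⟨i, j, rfl, rfl, h⟩
    · exact Or.inl ⟨i, j, rfl, rfl, h⟩
  loopless := by
    constructor
    rintro u (⟨i, j, rfl, h, -⟩ | ⟨i, j, rfl, h, -⟩) <;> simp at h

namespace TannerAux

open SimpleGraph Sum

variable {V : Type*} {G : SimpleGraph V}

lemma support_getElem? {u v : V} (w : G.Walk u v) : ∀ (j : ℕ), j ≤ w.length →
    w.support[j]? = some (w.getVert j) := by
  induction w with
  | nil => intro j hj; simp at hj; subst hj; simp
  | cons h p ih =>
    intro j hj
    cases j with
    | zero => simp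
    | succ j =>
      simp only [SimpleGraph.Walk.support_cons, List.getElem?_cons_succ,
        SimpleGraph.Walk.getVert_cons_succ]
      exact ih j (by simpa using hj)

lemma cycle_getVert_inj {a : V} {w : G.Walk a a} (hw : w.IsCycle) {i j : ℕ}
    (hi1 : 1 ≤ i) (hi : i ≤ w.length) (hj1 : 1 ≤ j) (hj : j ≤ w.length)
    (h : w.getVert i = w.getVert j) : i = j := by
  have hs := w.support_eq_cons
  have hti : w.support.tail[i-1]? = some (w.getVert i) := by
    have h2 := support_getElem? w i hi
    rw [hs, show i = (i-1)+1 by omega, List.getElem?_cons_succ] at h2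
    rwa [show (i-1)+1 = i by omega] at h2
  have htj : w.support.tail[j-1]? = some (w.getVert j) := by
    have h2 := support_getElem? w j hj
    rw [hs, show j = (j-1)+1 by omega, List.getElem?_cons_succ] at h2
    rwa [show (j-1)+1 = j by omega] at h2
  have hlen : w.support.tail.length = w.length := by
    have h2 : w.support.length = w.length + 1 := w.length_support
    have h3 : w.support.tail.length = w.support.length - 1 := List.length_tail
    omega
  have : i - 1 = j - 1 := by
    refine (List.getElem?_inj (by omega) hw.support_nodup).mp ?_
    rw [hti, htj, h]
  omega

/-- Build a walk from a sequence of vertices with consecutive adjacency. -/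
def mkWalk (v : ℕ → V) (hadj : ∀ j, G.Adj (v j) (v (j+1))) : (n : ℕ) → G.Walk (v 0) (v n)
  | 0 => .nil
  | n+1 => (mkWalk v hadj n).concat (hadj n)

@[simp] lemma mkWalk_length (v : ℕ → V) (hadj : ∀ j, G.Adj (v j) (v (j+1))) (n : ℕ) :
    (mkWalk v hadj n).length = n := by
  induction n with
  | zero => rfl
  | succ n ih => simp [mkWalk, SimpleGraph.Walk.length_concat, ih]

lemma mkWalk_support (v : ℕ → V) (hadj : ∀ j, G.Adj (v j) (v (j+1))) (n : ℕ) :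
    (mkWalk v hadj n).support = (List.range (n+1)).map v := by
  induction n with
  | zero => simp [mkWalk, List.range_succ]
  | succ n ih =>
    rw [mkWalk, SimpleGraph.Walk.support_concat, ih, List.range_succ (n := n+1)]
    simp

lemma mkWalk_edges (v : ℕ → V) (hadj : ∀ j, G.Adj (v j) (v (j+1))) (n : ℕ) :
    (mkWalk v hadj n).edges = (List.range n).map (fun j => s(v j, v (j+1))) := by
  induction n with
  | zero => simp [mkWalk, List.range_succ]
  | succ n ih =>
    rw [mkWalk, SimpleGraph.Walk.edges_concat, ih, List.range_succ (n := n)]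
    simp

variable {F : Type*} [Field F] {N i1 i2 : ℕ}

lemma entry_ne (hne : (i1 : ZMod N) ≠ (i2 : ZMod N)) (r c : Fin N) :
    (cpm F N i1 + cpm F N i2) r c ≠ 0 ↔
      (((c:ℕ) : ZMod N) = ((r:ℕ) : ZMod N) + i1 ∨ ((c:ℕ) : ZMod N) = ((r:ℕ) : ZMod N) + i2) := by
  simp only [Matrix.add_apply, cpm, Matrix.of_apply]
  split_ifs with h1 h2 h2
  · exact absurd (add_left_cancel (h1 ▸ h2 : ((r:ℕ):ZMod N) + i1 = ((r:ℕ):ZMod N) + i2)) hne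
  · simp [h1]
  · simp [h2]
  · simp [h1, h2]

lemma adj_elim (hne : (i1 : ZMod N) ≠ (i2 : ZMod N)) {u v : Fin N ⊕ Fin N}
    (h : (tannerGraph (cpm F N i1 + cpm F N i2)).Adj u v) :
    (∃ r c, u = inl r ∧ v = inr c ∧
      (((c:ℕ) : ZMod N) = ((r:ℕ) : ZMod N) + i1 ∨ ((c:ℕ) : ZMod N) = ((r:ℕ) : ZMod N) + i2)) ∨
    (∃ r c, u = inr c ∧ v = inl r ∧
      (((c:ℕ) : ZMod N) = ((r:ℕ) : ZMod N) + i1 ∨ ((c:ℕ) : ZMod N) = ((r:ℕ) : ZMod N) + i2)) := by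
  rcases h with ⟨r, c, hu, hv, hM⟩ | ⟨r, c, hu, hv, hM⟩
  · exact Or.inl ⟨r, c, hu, hv, (entry_ne hne r c).mp hM⟩
  · exact Or.inr ⟨r, c, hu, hv, (entry_ne hne r c).mp hM⟩

lemma adj_of (hne : (i1 : ZMod N) ≠ (i2 : ZMod N)) (r c : Fin N)
    (h : ((c:ℕ) : ZMod N) = ((r:ℕ) : ZMod N) + i1 ∨ ((c:ℕ) : ZMod N) = ((r:ℕ) : ZMod N) + i2) :
    (tannerGraph (cpm F N i1 + cpm F N i2)).Adj (inl r) (inr c) :=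
  Or.inl ⟨r, c, rfl, rfl, (entry_ne hne r c).mpr h⟩

lemma finCast_inj (x y : Fin N) (h : ((x:ℕ) : ZMod N) = ((y:ℕ) : ZMod N)) : x = y := by
  haveI : NeZero N := ⟨x.pos.ne'⟩
  have := congrArg ZMod.val h
  rwa [ZMod.val_natCast_of_lt x.isLt, ZMod.val_natCast_of_lt y.isLt, ← Fin.ext_iff] at this

lemma div_gcd_dvd_of_dvd_mul {N d m : ℕ} (hN0 : 0 < N) (h : N ∣ m * d) :
    N / N.gcd d ∣ m := by
  set g := N.gcd d with hg
  have hg0 : 0 < g := Nat.gcd_pos_of_pos_left d hN0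
  have hgN : g ∣ N := Nat.gcd_dvd_left N d
  have hgd : g ∣ d := Nat.gcd_dvd_right N d
  have hco : Nat.Coprime (N / g) (d / g) := Nat.coprime_div_gcd_div_gcd hg0
  obtain ⟨d1, hd1⟩ := hgd
  have hdg : d / g = d1 := by rw [hd1, Nat.mul_div_cancel_left _ hg0]
  have h2 : g * (N / g) ∣ g * (m * d1) := by
    rw [Nat.mul_div_cancel' hgN]
    calc N ∣ m * d := h
      _ = g * (m * d1) := by rw [hd1]; ring
  have h3 : N / g ∣ m * (d / g) := by
    rw [hdg]; exact (mul_dvd_mul_iff_left hg0.ne').mp h2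
  exact hco.dvd_of_dvd_mul_right h3

lemma N_dvd_k0_mul {N d : ℕ} : N ∣ (N / N.gcd d) * d := by
  have hgd : N.gcd d ∣ d := Nat.gcd_dvd_right N d
  have hgN : N.gcd d ∣ N := Nat.gcd_dvd_left N d
  obtain ⟨d1, hd1⟩ := hgd
  have : (N / N.gcd d) * d = N * d1 := by
    nth_rewrite 2 [hd1]
    rw [← mul_assoc, Nat.div_mul_cancel hgN]
  rw [this]
  exact Dvd.intro d1 rfl

lemma k0_facts {N d : ℕ} (hN0 : 0 < N) (hNodd : Odd N) (hd0 : 0 < d) (hdN : d < N) :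
    3 ≤ N / N.gcd d := by
  set g := N.gcd d with hg
  have hg0 : 0 < g := Nat.gcd_pos_of_pos_left d hN0
  have hgN : g ∣ N := Nat.gcd_dvd_left N d
  have hgd : g ∣ d := Nat.gcd_dvd_right N d
  have hk0 : N / g ∣ N := Nat.div_dvd_of_dvd hgN
  have hodd : ¬ (2 ∣ N / g) := fun h => (Nat.not_even_iff_odd.mpr hNodd) (even_iff_two_dvd.mpr (h.trans hk0))
  have hne1 : N / g ≠ 1 := by
    intro h1
    have : N = g := by
      have := Nat.div_mul_cancel hgN
      rw [h1, one_mul] at this; omega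
    have : N ∣ d := this ▸ hgd
    exact absurd (Nat.le_of_dvd hd0 this) (by omega)
  have hpos : 0 < N / g := Nat.div_pos (Nat.le_of_dvd hN0 hgN) hg0
  rcases Nat.even_or_odd (N / g) with h | h
  · exact absurd (even_iff_two_dvd.mp h) hodd
  · rcases h with ⟨m, hm⟩; omega

section Bounds

lemma lower_inl {F : Type*} [Field F] {N i1 i2 : ℕ}
    (hN0 : 0 < N) (h12 : i1 < i2) (hi2 : i2 ≤ N - 1)
    (r0 : Fin N) (w : (tannerGraph (cpm F N i1 + cpm F N i2)).Walk (inl r0) (inl r0))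
    (hw : w.IsCycle) :
    2 * (N / N.gcd (i2 - i1)) ≤ w.length := by
  haveI : NeZero N := ⟨hN0.ne'⟩
  have hi2N : i2 < N := by omega
  have hne : (i1 : ZMod N) ≠ (i2 : ZMod N) := by
    intro h
    have := congrArg ZMod.val h
    rw [ZMod.val_natCast_of_lt (by omega), ZMod.val_natCast_of_lt (by omega)] at this
    omega
  set n := w.length with hn
  set v : ℕ → (Fin N ⊕ Fin N) := w.getVert with hv
  have hn3 : 3 ≤ n := hw.three_le_length
  have hv0 : v 0 = inl r0 := w.getVert_zero
  have hvn : v n = inl r0 := w.getVert_length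
  have hadj : ∀ j, j < n → (tannerGraph (cpm F N i1 + cpm F N i2)).Adj (v j) (v (j+1)) :=
    fun j hj => w.adj_getVert_succ hj
  set φ : (Fin N ⊕ Fin N) → ZMod N :=
    Sum.elim (fun x : Fin N => ((x:ℕ) : ZMod N)) (fun x : Fin N => ((x:ℕ) : ZMod N)) with hφ
  -- parity of sides
  have hside : ∀ j, j ≤ n → ((j % 2 = 0 → ∃ x, v j = inl x) ∧ (j % 2 = 1 → ∃ x, v j = inr x)) := by
    intro j
    induction j with
    | zero => exact fun _ => ⟨fun _ => ⟨r0, hv0⟩, fun h => by omega⟩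
    | succ j ih =>
      intro hj
      obtain ⟨ih0, ih1⟩ := ih (by omega)
      rcases adj_elim hne (hadj j (by omega)) with ⟨r, c, hu, hv', _⟩ | ⟨r, c, hu, hv', _⟩
      · refine ⟨fun h0 => ?_, fun _ => ⟨c, hv'⟩⟩
        obtain ⟨x, hx⟩ := ih1 (by omega)
        rw [hu] at hx; exact absurd hx (by simp)
      · refine ⟨fun _ => ⟨r, hv'⟩, fun h1 => ?_⟩
        obtain ⟨x, hx⟩ := ih0 (by omega)
        rw [hu] at hx; exact absurd hx (by simp)
  have hneven : n % 2 = 0 := by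
    rcases Nat.even_or_odd n with h | h
    · exact Nat.even_iff.mp h
    · obtain ⟨x, hx⟩ := (hside n le_rfl).2 (Nat.odd_iff.mp h)
      rw [hvn] at hx; exact absurd hx (by simp)
  set k := n / 2 with hkdef
  have hk : n = 2 * k := by omega
  have hk2 : 2 ≤ k := by omega
  set R : ℕ → ZMod N := fun t => φ (v (2*t)) with hR
  set C : ℕ → ZMod N := fun t => φ (v (2*t+1)) with hC
  have hrow : ∀ t, 2*t ≤ n → ∃ x : Fin N, v (2*t) = inl x :=
    fun t ht => (hside _ ht).1 (by omega)
  have hcol : ∀ t, 2*t+1 ≤ n → ∃ x : Fin N, v (2*t+1) = inr x :=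
    fun t ht => (hside _ ht).2 (by omega)
  have hedgeE : ∀ t, 2*t < n → C t - R t = (i1:ZMod N) ∨ C t - R t = (i2:ZMod N) := by
    intro t ht
    rcases adj_elim hne (hadj (2*t) ht) with ⟨r, c, hu, hv', hor⟩ | ⟨r, c, hu, hv', hor⟩
    · have hRt : R t = ((r:ℕ) : ZMod N) := by rw [hR]; simp only [hu]; simp [hφ]
      have hCt : C t = ((c:ℕ) : ZMod N) := by rw [hC]; simp only [hv']; simp [hφ]
      rcases hor with h | h
      · exact Or.inl (by rw [hRt, hCt, h]; ring)
      · exact Or.inr (by rw [hRt, hCt, h]; ring)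
    · obtain ⟨x, hx⟩ := hrow t (by omega)
      rw [hu] at hx; exact absurd hx (by simp)
  have hedgeO : ∀ t, 2*t+2 ≤ n → C t - R (t+1) = (i1:ZMod N) ∨ C t - R (t+1) = (i2:ZMod N) := by
    intro t ht
    rcases adj_elim hne (hadj (2*t+1) (by omega)) with ⟨r, c, hu, hv', hor⟩ | ⟨r, c, hu, hv', hor⟩
    · obtain ⟨x, hx⟩ := hcol t (by omega)
      rw [hu] at hx; exact absurd hx (by simp)
    · have hCt : C t = ((c:ℕ) : ZMod N) := by rw [hC]; simp only [hu]; simp [hφ]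
      have hRt : R (t+1) = ((r:ℕ) : ZMod N) := by
        rw [hR]; simp only [show 2*(t+1) = 2*t+1+1 by ring]; simp only [hv']; simp [hφ]
      rcases hor with h | h
      · exact Or.inl (by rw [hRt, hCt, h]; ring)
      · exact Or.inr (by rw [hRt, hCt, h]; ring)
  have hφinl : ∀ (x y : Fin N), φ (inl x) = φ (inl y) → (inl x : Fin N ⊕ Fin N) = inl y := by
    intro x y h; rw [finCast_inj x y (by simpa [hφ] using h)]
  have hφinr : ∀ (x y : Fin N), φ (inr x) = φ (inr y) → (inr x : Fin N ⊕ Fin N) = inr y := by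
    intro x y h; rw [finCast_inj x y (by simpa [hφ] using h)]
  have hRne : ∀ t, 2*t+2 ≤ n → R t ≠ R (t+1) := by
    intro t ht hEq
    obtain ⟨x, hx⟩ := hrow t (by omega)
    obtain ⟨y, hy⟩ := hrow (t+1) (by omega)
    rw [hR] at hEq
    simp only [hx, show 2*(t+1) = 2*t+2 by ring] at hEq hy
    rw [hy] at hEq
    have hveq : v (2*t) = v (2*t+2) := by rw [hx, hy]; exact hφinl x y hEq
    rcases Nat.eq_zero_or_pos t with rfl | htpos
    · -- v 0 = v 2, so v n = v 2
      have h2 : v n = v 2 := by rw [hvn, ← hv0]; simpa using hveq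
      have := cycle_getVert_inj hw (by omega) (le_rfl) (by omega) (by omega) h2
      omega
    · have := cycle_getVert_inj hw (by omega : 1 ≤ 2*t) (by omega) (by omega : 1 ≤ 2*t+2) (by omega) hveq
      omega
  have hCne : ∀ t, 2*t+3 ≤ n → C t ≠ C (t+1) := by
    intro t ht hEq
    obtain ⟨x, hx⟩ := hcol t (by omega)
    obtain ⟨y, hy⟩ := hcol (t+1) (by omega)
    rw [hC] at hEq
    simp only [hx, show 2*(t+1)+1 = 2*t+3 by ring] at hEq hy
    rw [hy] at hEq
    have hveq : v (2*t+1) = v (2*t+3) := by rw [hx, hy]; exact hφinr x y hEq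
    have := cycle_getVert_inj hw (by omega : 1 ≤ 2*t+1) (by omega) (by omega : 1 ≤ 2*t+3) (by omega) hveq
    omega
  have pair : ∀ a b c : ZMod N,
      (a = (i1:ZMod N) ∨ a = (i2:ZMod N)) → (b = (i1:ZMod N) ∨ b = (i2:ZMod N)) →
      (c = (i1:ZMod N) ∨ c = (i2:ZMod N)) → a ≠ c → b ≠ c → a = b := by
    intro a b c ha hb hc hac hbc
    rcases ha with rfl | rfl <;> rcases hb with rfl | rfl <;> rcases hc with rfl | rfl <;>
      first
        | rfl
        | exact absurd rfl hac
        | exact absurd rfl hbc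
  -- main induction
  have main : ∀ t, t ≤ k →
      (R t = R 0 + (t : ZMod N) * (R 1 - R 0)) ∧
      (t < k → (C t - R t = C 0 - R 0 ∧ C t - R (t+1) = C 0 - R 1)) := by
    intro t
    induction t with
    | zero => exact fun _ => ⟨by simp, fun _ => ⟨rfl, rfl⟩⟩
    | succ t ih =>
      intro ht
      obtain ⟨ihR, ihD⟩ := ih (by omega)
      obtain ⟨hDt, hD't⟩ := ihD (by omega)
      have hstep : R (t+1) = R t + (R 1 - R 0) := by
        have h0 : (C t - R t) - (C t - R (t+1)) = (C 0 - R 0) - (C 0 - R 1) := by rw [hDt, hD't]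
        linear_combination h0
      constructor
      · rw [hstep, ihR]; push_cast; ring
      · intro htk
        -- t+1 < k
        have h2t : 2*t+4 ≤ n := by omega
        have hDne : C t - R t ≠ C t - R (t+1) := by
          intro h; exact hRne t (by omega) (by linear_combination -h)
        have hD'ne : C (t+1) - R (t+1) ≠ C t - R (t+1) := by
          intro h; refine hCne t (by omega) ?_; linear_combination -h
        have hDt1 : C (t+1) - R (t+1) = C 0 - R 0 := by
          have := pair (C t - R t) (C (t+1) - R (t+1)) (C t - R (t+1))
            (hedgeE t (by omega)) (hedgeE (t+1) (by omega)) (hedgeO t (by omega)) hDne hD'ne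
          rw [← this, hDt]
        have hD'ne2 : C (t+1) - R (t+2) ≠ C (t+1) - R (t+1) := by
          intro h; refine hRne (t+1) (by omega) ?_; linear_combination h
        have hD't1 : C (t+1) - R (t+2) = C 0 - R 1 := by
          have := pair (C t - R (t+1)) (C (t+1) - R (t+2)) (C (t+1) - R (t+1))
            (hedgeO t (by omega)) (hedgeO (t+1) (by omega)) (hedgeE (t+1) (by omega))
            (fun h => hD'ne h.symm) hD'ne2
          rw [← this, hD't]
        exact ⟨hDt1, hD't1⟩
  -- conclude
  have hRk : R k = R 0 := by
    have hveq : v (2*k) = v (2*0) := by rw [← hk, hvn, Nat.mul_zero, hv0]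
    simp only [hR, hveq]
  have hmul : (k : ZMod N) * (R 1 - R 0) = 0 := by
    have := (main k le_rfl).1
    rw [hRk] at this
    linear_combination -this
  -- R 1 - R 0 = ±(i2 - i1)
  have hd : ((i2 - i1 : ℕ) : ZMod N) = (i2 : ZMod N) - (i1 : ZMod N) := by
    push_cast [Nat.cast_sub h12.le]; ring
  have hD0 := hedgeE 0 (by omega)
  have hD'0 := hedgeO 0 (by omega)
  have hDne0 : C 0 - R 0 ≠ C 0 - R 1 := by
    intro h; exact hRne 0 (by omega) (by linear_combination -h)
  have hkd : ((k * (i2 - i1) : ℕ) : ZMod N) = 0 := by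
    have hε : R 1 - R 0 = (i2:ZMod N) - i1 ∨ R 1 - R 0 = (i1:ZMod N) - i2 := by
      rcases hD0 with h1 | h1 <;> rcases hD'0 with h2 | h2
      · exact absurd (h1.trans h2.symm) hDne0
      · exact Or.inr (by linear_combination h1 - h2)
      · exact Or.inl (by linear_combination h1 - h2)
      · exact absurd (h1.trans h2.symm) hDne0
    push_cast [Nat.cast_sub h12.le]
    rcases hε with h | h
    · linear_combination hmul - (k : ZMod N) * h
    · linear_combination (k : ZMod N) * h - hmul
  have hdvd : N ∣ k * (i2 - i1) := (ZMod.natCast_eq_zero_iff _ _).mp hkd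
  have hk0dvd : N / N.gcd (i2 - i1) ∣ k := div_gcd_dvd_of_dvd_mul hN0 hdvd
  have : N / N.gcd (i2 - i1) ≤ k := Nat.le_of_dvd (by omega) hk0dvd
  omega


lemma lower {F : Type*} [Field F] {N i1 i2 : ℕ}
    (hN0 : 0 < N) (h12 : i1 < i2) (hi2 : i2 ≤ N - 1)
    (a : Fin N ⊕ Fin N) (w : (tannerGraph (cpm F N i1 + cpm F N i2)).Walk a a)
    (hw : w.IsCycle) :
    2 * (N / N.gcd (i2 - i1)) ≤ w.length := by
  haveI : NeZero N := ⟨hN0.ne'⟩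
  have hi2N : i2 < N := by omega
  have hne : (i1 : ZMod N) ≠ (i2 : ZMod N) := by
    intro h
    have := congrArg ZMod.val h
    rw [ZMod.val_natCast_of_lt (by omega), ZMod.val_natCast_of_lt (by omega)] at this
    omega
  rcases a with r | c
  · exact lower_inl hN0 h12 hi2 r w hw
  · have hn3 : 3 ≤ w.length := hw.three_le_length
    have hadj0 := w.adj_getVert_succ (show 0 < w.length by omega)
    rw [w.getVert_zero] at hadj0
    rcases adj_elim hne hadj0 with ⟨r, c', hu, hv', -⟩ | ⟨r, c', hu, hv', -⟩
    · exact absurd hu (by simp)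
    · have hmem : inl r ∈ w.support :=
        SimpleGraph.Walk.mem_support_iff_exists_getVert.mpr ⟨1, hv'.symm ▸ rfl, by omega⟩
      have hc' : (w.rotate (inl r) hmem).IsCycle := hw.rotate hmem
      have hlen : (w.rotate (inl r) hmem).length = w.length := by
        have hperm := (w.rotate_darts (inl r) hmem).perm.length_eq
        rwa [SimpleGraph.Walk.length_darts, SimpleGraph.Walk.length_darts] at hperm
      have := lower_inl hN0 h12 hi2 r (w.rotate (inl r) hmem) hc'
      omega

lemma upper {F : Type*} [Field F] {N i1 i2 : ℕ}
    (hN0 : 0 < N) (h12 : i1 < i2) (hi2 : i2 ≤ N - 1) :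
    ∃ (a : Fin N ⊕ Fin N) (w : (tannerGraph (cpm F N i1 + cpm F N i2)).Walk a a),
      w.IsCycle ∧ w.length = 2 * (N / N.gcd (i2 - i1)) := by
  haveI : NeZero N := ⟨hN0.ne'⟩
  have hi2N : i2 < N := by omega
  set d := i2 - i1 with hd
  have hd0 : 0 < d := by omega
  have hdN : d < N := by omega
  set k0 := N / N.gcd d with hk0
  have hk01 : 1 ≤ k0 := by
    have hgN : N.gcd d ∣ N := Nat.gcd_dvd_left N d
    have hg0 : 0 < N.gcd d := Nat.gcd_pos_of_pos_left d hN0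
    exact Nat.div_pos (Nat.le_of_dvd hN0 hgN) hg0
  have hne : (i1 : ZMod N) ≠ (i2 : ZMod N) := by
    intro h
    have := congrArg ZMod.val h
    rw [ZMod.val_natCast_of_lt (by omega), ZMod.val_natCast_of_lt (by omega)] at this
    omega
  set toFin : ZMod N → Fin N := fun z => ⟨z.val, ZMod.val_lt z⟩ with htoFin
  have hcast : ∀ z : ZMod N, ((toFin z : ℕ) : ZMod N) = z := fun z => ZMod.natCast_rightInverse z
  have htoFin_inj : ∀ z z' : ZMod N, toFin z = toFin z' → z = z' := by
    intro z z' h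
    have := congrArg (fun x : Fin N => ((x : ℕ) : ZMod N)) h
    simpa [hcast] using this
  set vseq : ℕ → (Fin N ⊕ Fin N) := fun j =>
    if j % 2 = 0 then inl (toFin ((j/2 * d : ℕ) : ZMod N))
    else inr (toFin ((j/2 * d + i2 : ℕ) : ZMod N)) with hvseq
  -- explicit values
  have hveven : ∀ t, vseq (2*t) = inl (toFin ((t * d : ℕ) : ZMod N)) := by
    intro t
    have h1 : (2*t) % 2 = 0 := by omega
    have h2 : (2*t) / 2 = t := by omega
    simp [hvseq, h1, h2]
  have hvodd : ∀ t, vseq (2*t+1) = inr (toFin ((t * d + i2 : ℕ) : ZMod N)) := by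
    intro t
    have h1 : (2*t+1) % 2 = 1 := by omega
    have h2 : (2*t+1) / 2 = t := by omega
    simp [hvseq, h1, h2]
  have hadjseq : ∀ j, (tannerGraph (cpm F N i1 + cpm F N i2)).Adj (vseq j) (vseq (j+1)) := by
    intro j
    rcases Nat.even_or_odd j with ⟨t, ht⟩ | ⟨t, ht⟩
    · have hj : j = 2*t := by omega
      subst hj
      rw [hveven t, show 2*t+1 = 2*t+1 from rfl, hvodd t]
      refine adj_of hne _ _ (Or.inr ?_)
      rw [hcast, hcast]
      push_cast
      ring
    · have hj : j = 2*t+1 := by omega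
      subst hj
      rw [hvodd t, show 2*t+1+1 = 2*(t+1) from by ring, hveven (t+1)]
      refine ((adj_of hne _ _ (Or.inl ?_))).symm
      rw [hcast, hcast]
      have : ((d:ℕ) : ZMod N) = (i2 : ZMod N) - (i1 : ZMod N) := by
        rw [hd]; push_cast [Nat.cast_sub h12.le]; ring
      push_cast
      rw [show ((d:ℕ) : ZMod N) = (i2 : ZMod N) - (i1 : ZMod N) from this]
      ring
  -- injectivity of multiples of d
  have tmul : ∀ t t', t ≤ t' → t' ≤ k0 → ((t*d:ℕ):ZMod N) = ((t'*d:ℕ):ZMod N) →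
      (t = t' ∨ (t = 0 ∧ t' = k0)) := by
    intro t t' htt' ht'k h
    have hsub : (((t'*d - t*d : ℕ) : ZMod N)) = 0 := by
      rw [Nat.cast_sub (Nat.mul_le_mul_right d htt')]
      rw [h]; ring
    have hdvd : N ∣ (t' - t) * d := by
      rw [Nat.sub_mul]
      exact (ZMod.natCast_eq_zero_iff _ _).mp hsub
    have := div_gcd_dvd_of_dvd_mul hN0 hdvd
    rw [← hk0] at this
    rcases Nat.lt_or_ge (t' - t) k0 with hlt | hge
    · have : t' - t = 0 := Nat.eq_zero_of_dvd_of_lt this hlt |>.symm ▸ rfl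
      omega
    · have h1 : t' - t ≤ k0 := by omega
      have h2 : t' - t = k0 := by omega
      omega
  have tmul' : ∀ t t', t ≤ k0 → t' ≤ k0 → ((t*d:ℕ):ZMod N) = ((t'*d:ℕ):ZMod N) →
      (t = t' ∨ (t = 0 ∧ t' = k0) ∨ (t = k0 ∧ t' = 0)) := by
    intro t t' ht ht' h
    rcases Nat.le_total t t' with htt | htt
    · rcases tmul t t' htt ht' h with h1 | h1
      · exact Or.inl h1
      · exact Or.inr (Or.inl h1)
    · rcases tmul t' t htt ht h.symm with h1 | h1
      · exact Or.inl h1.symm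
      · exact Or.inr (Or.inr ⟨h1.2, h1.1⟩)
  -- shifted col equality
  have hcol_eq : ∀ t t', ((t*d + i2 :ℕ):ZMod N) = ((t'*d + i2:ℕ):ZMod N) →
      ((t*d:ℕ):ZMod N) = ((t'*d:ℕ):ZMod N) := by
    intro t t' h
    push_cast at h ⊢
    linear_combination h
  have hd_ne : ¬ (N ∣ d) := fun h => absurd (Nat.le_of_dvd hd0 h) (by omega)
  -- the walk
  have hend : vseq (2*k0) = vseq 0 := by
    rw [hveven k0, show (0:ℕ) = 2*0 from rfl, hveven 0]
    congr 1
    apply congrArg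
    rw [(ZMod.natCast_eq_zero_iff _ _).mpr N_dvd_k0_mul]
    norm_num
  set W0 := mkWalk vseq hadjseq (2*k0) with hW0
  set W : (tannerGraph (cpm F N i1 + cpm F N i2)).Walk (vseq 0) (vseq 0) :=
    W0.copy rfl hend with hW
  have hlen : W.length = 2*k0 := by
    rw [hW, SimpleGraph.Walk.length_copy, hW0, mkWalk_length]
  -- vertex injectivity on [1, 2k0]
  have hvinj : ∀ j j', 1 ≤ j → j ≤ 2*k0 → 1 ≤ j' → j' ≤ 2*k0 → vseq j = vseq j' → j = j' := by
    intro j j' hj1 hj2 hj'1 hj'2 h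
    rcases Nat.even_or_odd j with ⟨t, ht⟩ | ⟨t, ht⟩ <;>
      rcases Nat.even_or_odd j' with ⟨s, hs⟩ | ⟨s, hs⟩
    · have hjt : j = 2*t := by omega
      have hjs : j' = 2*s := by omega
      subst hjt; subst hjs
      rw [hveven t, hveven s] at h
      have h2 := htoFin_inj _ _ (by injection h)
      rcases tmul' t s (by omega) (by omega) h2 with h3 | h3 | h3 <;> omega
    · have hjt : j = 2*t := by omega
      have hjs : j' = 2*s+1 := by omega
      subst hjt; subst hjs
      rw [hveven t, hvodd s] at h
      simp at h
    · have hjt : j = 2*t+1 := by omega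
      have hjs : j' = 2*s := by omega
      subst hjt; subst hjs
      rw [hvodd t, hveven s] at h
      simp at h
    · have hjt : j = 2*t+1 := by omega
      have hjs : j' = 2*s+1 := by omega
      subst hjt; subst hjs
      rw [hvodd t, hvodd s] at h
      have h2 := hcol_eq t s (htoFin_inj _ _ (by injection h))
      rcases tmul' t s (by omega) (by omega) h2 with h3 | h3 | h3 <;> omega
  -- support tail nodup
  have hsupp : W.support.tail.Nodup := by
    have hs : W.support = (List.range (2*k0+1)).map vseq := by
      rw [hW, SimpleGraph.Walk.support_copy, hW0, mkWalk_support]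
    rw [hs, List.range_succ_eq_map, List.map_cons, List.tail_cons, List.map_map]
    refine List.Nodup.map_on ?_ (List.nodup_range)
    intro x hx y hy hxy
    simp only [List.mem_range] at hx hy
    exact Nat.succ_injective
      (hvinj (x+1) (y+1) (by omega) (by omega) (by omega) (by omega) (by simpa using hxy))
  -- edges nodup
  have hedges : W.edges.Nodup := by
    have he : W.edges = (List.range (2*k0)).map (fun j => s(vseq j, vseq (j+1))) := by
      rw [hW, SimpleGraph.Walk.edges_copy, hW0, mkWalk_edges]
    rw [he]
    refine List.Nodup.map_on ?_ (List.nodup_range)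
    intro x hx y hy hxy
    simp only [List.mem_range] at hx hy
    rcases Nat.even_or_odd x with ⟨t, ht⟩ | ⟨t, ht⟩ <;>
      rcases Nat.even_or_odd y with ⟨s, hs⟩ | ⟨s, hs⟩
    · have hxt : x = 2*t := by omega
      have hys : y = 2*s := by omega
      subst hxt; subst hys
      rw [hveven t, hveven s, show 2*t+1 = 2*t+1 from rfl, hvodd t, hvodd s] at hxy
      rw [Sym2.eq_iff] at hxy
      rcases hxy with ⟨h1, h2⟩ | ⟨h1, h2⟩
      · have h3 := htoFin_inj _ _ (by injection h1)
        rcases tmul' t s (by omega) (by omega) h3 with h4 | h4 | h4 <;> omega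
      · simp at h1
    · have hxt : x = 2*t := by omega
      have hys : y = 2*s+1 := by omega
      subst hxt; subst hys
      rw [hveven t, show 2*t+1 = 2*t+1 from rfl, hvodd t,
        hvodd s, show 2*s+1+1 = 2*(s+1) from by ring, hveven (s+1)] at hxy
      rw [Sym2.eq_iff] at hxy
      rcases hxy with ⟨h1, h2⟩ | ⟨h1, h2⟩
      · simp at h1
      · -- inl (t d) = inl ((s+1) d) and inr (t d + i2) = inr (s d + i2)
        have h3 := hcol_eq t s (htoFin_inj _ _ (by injection h2))
        have h4 := htoFin_inj _ _ (by injection h1)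
        -- t d = s d and t d = (s+1) d  ⇒ (s+1) d = s d ⇒ N ∣ d, contradiction
        exfalso
        apply hd_ne
        have h5 : (((s+1)*d : ℕ) : ZMod N) = ((s*d : ℕ) : ZMod N) := by
          rw [← h4, h3]
        have h6 : ((d : ℕ) : ZMod N) = 0 := by
          push_cast at h5 ⊢
          linear_combination h5
        exact (ZMod.natCast_eq_zero_iff _ _).mp h6
    · have hxt : x = 2*t+1 := by omega
      have hys : y = 2*s := by omega
      subst hxt; subst hys
      rw [hvodd t, show 2*t+1+1 = 2*(t+1) from by ring, hveven (t+1),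
        hveven s, show 2*s+1 = 2*s+1 from rfl, hvodd s] at hxy
      rw [Sym2.eq_iff] at hxy
      rcases hxy with ⟨h1, h2⟩ | ⟨h1, h2⟩
      · simp at h1
      · have h3 := hcol_eq t s (htoFin_inj _ _ (by injection h1))
        have h4 := htoFin_inj _ _ (by injection h2)
        exfalso
        apply hd_ne
        have h5 : (((t+1)*d : ℕ) : ZMod N) = ((t*d : ℕ) : ZMod N) := by
          rw [h4, ← h3]
        have h6 : ((d : ℕ) : ZMod N) = 0 := by
          push_cast at h5 ⊢
          linear_combination h5
        exact (ZMod.natCast_eq_zero_iff _ _).mp h6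
    · have hxt : x = 2*t+1 := by omega
      have hys : y = 2*s+1 := by omega
      subst hxt; subst hys
      rw [hvodd t, show 2*t+1+1 = 2*(t+1) from by ring, hveven (t+1),
        hvodd s, show 2*s+1+1 = 2*(s+1) from by ring, hveven (s+1)] at hxy
      rw [Sym2.eq_iff] at hxy
      rcases hxy with ⟨h1, h2⟩ | ⟨h1, h2⟩
      · have h3 := hcol_eq t s (htoFin_inj _ _ (by injection h1))
        rcases tmul' t s (by omega) (by omega) h3 with h4 | h4 | h4 <;> omega
      · simp at h1
  have hne_nil : W ≠ SimpleGraph.Walk.nil := by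
    intro h
    have := congrArg SimpleGraph.Walk.length h
    rw [hlen] at this
    simp at this
    omega
  exact ⟨vseq 0, W, ⟨⟨⟨hedges⟩, hne_nil⟩, hsupp⟩, hlen⟩

end Bounds

end TannerAux

/-- **Girth of the Tanner graph of a weight-2 circulant.**  Let `N` be odd,
`0 ≤ i1 < i2 ≤ N - 1`, and let `A = P_N^{i1} + P_N^{i2}` be the circulant matrix of
`a(x) = x^{i1} + x^{i2}` over a finite field `F`.  Then the girth of the Tanner graph
of `A` equals `2N / gcd(N, i2 - i1)`; in particular (since `N` is odd) it is strictly
greater than 4. -/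
theorem girth_tanner_graph_weight_two_circulant
    (N : ℕ) (hN0 : 0 < N) (hNodd : Odd N)
    (q : ℕ) (F : Type*) [Field F] [Fintype F] (hq : Fintype.card F = q)
    (i1 i2 : ℕ) (h12 : i1 < i2) (hi2 : i2 ≤ N - 1) :
    (tannerGraph (cpm F N i1 + cpm F N i2)).egirth
        = ((2 * N / Nat.gcd N (i2 - i1) : ℕ) : ℕ∞)
      ∧ 4 < (tannerGraph (cpm F N i1 + cpm F N i2)).egirth := by
  have hd0 : 0 < i2 - i1 := by omega
  have hdN : i2 - i1 < N := by omega
  have hk03 : 3 ≤ N / N.gcd (i2 - i1) := TannerAux.k0_facts hN0 hNodd hd0 hdN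
  have hL : 2 * N / N.gcd (i2 - i1) = 2 * (N / N.gcd (i2 - i1)) :=
    Nat.mul_div_assoc 2 (Nat.gcd_dvd_left _ _)
  obtain ⟨a, w, hw, hwl⟩ := TannerAux.upper (F := F) hN0 h12 hi2
  have hub : (tannerGraph (cpm F N i1 + cpm F N i2)).egirth
      ≤ ((2 * (N / N.gcd (i2 - i1)) : ℕ) : ℕ∞) := by
    rw [SimpleGraph.egirth]
    refine iInf_le_of_le a (iInf_le_of_le w (iInf_le_of_le hw ?_))
    exact le_of_eq (by rw [hwl])
  have hlb : ((2 * (N / N.gcd (i2 - i1)) : ℕ) : ℕ∞)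
      ≤ (tannerGraph (cpm F N i1 + cpm F N i2)).egirth := by
    rw [SimpleGraph.le_egirth]
    intro b w' hw'
    have := TannerAux.lower hN0 h12 hi2 b w' hw'
    exact_mod_cast this
  have heg : (tannerGraph (cpm F N i1 + cpm F N i2)).egirth
      = ((2 * (N / N.gcd (i2 - i1)) : ℕ) : ℕ∞) := le_antisymm hub hlb
  constructor
  · rw [heg, hL]
  · rw [heg]
    exact_mod_cast (by omega : 4 < 2 * (N / N.gcd (i2 - i1)))
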